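/- Let A ∈ ℝ^{d×p} with singular value decomposition A = U D Vᵀ, where the columns of U are u₁,…,u_p. Fix k ≤ p, ε > 0, and let v be a vector in the image of U with Σ_{l=1}^p ⟨u_l, v⟩²/ε² ≤ 1 and Σ_{l=1}^p ⟨u_l, v⟩²/σ_l(A)² ≤ 1 (interpreting terms with σ_l(A) = 0 as requiring ⟨u_l,v⟩ = 0). Define A(ε) to be the matrix with the same singular vectors as A but with j-th singular value replaced by sqrt(2)·min{σ_j(A), ε}. Then v lies in the ellipsoid A(ε)(B_p(1)), i.e., there exists x ∈ ℝ^p with ‖x‖₂ ≤ 1 and A(ε)·x = v. -/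

import Mathlib

open Matrix

/-- If v lies in the image of U and satisfies the two ellipsoid constraints
Σ_l ⟨u_l,v⟩²/ε² ≤ 1 and Σ_l ⟨u_l,v⟩²/σ_l(A)² ≤ 1 (terms with σ_l(A)=0 interpreted as
forcing ⟨u_l,v⟩=0), then v lies in the ellipsoid A(ε)(B_p(1)), where A(ε) has the same
singular vectors as A = U D Vᵀ and j-th singular value √2·min(σ_j(A), ε). -/
theorem mem_shrunken_ellipsoid
    {d p : ℕ} (hdp : p ≤ d)
    (U : Matrix (Fin d) (Fin p) ℝ) (V : Matrix (Fin p) (Fin p) ℝ)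
    (σ : Fin p → ℝ)
    (hU : Uᵀ * U = 1) (hV : Vᵀ * V = 1) (hσ : ∀ j, 0 ≤ σ j)
    (A : Matrix (Fin d) (Fin p) ℝ) (hA : A = U * diagonal σ * Vᵀ)
    (ε : ℝ) (hε : 0 < ε)
    (v : Fin d → ℝ) (hv : ∃ y : Fin p → ℝ, U.mulVec y = v)
    (h1 : (∑ l, (∑ i, U i l * v i) ^ 2 / ε ^ 2) ≤ 1)
    (h2 : (∑ l, if σ l = 0 then 0 else (∑ i, U i l * v i) ^ 2 / (σ l) ^ 2) ≤ 1)
    (h2' : ∀ l, σ l = 0 → (∑ i, U i l * v i) = 0) :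
    ∃ x : Fin p → ℝ, (∑ i, (x i) ^ 2) ≤ 1 ∧
      (U * diagonal (fun j => Real.sqrt 2 * min (σ j) ε) * Vᵀ).mulVec x = v := by
  obtain ⟨y, hy⟩ := hv
  set c : Fin p → ℝ := fun l => ∑ i, U i l * v i with hc
  -- c = Uᵀ v = y
  have hcv : c = Uᵀ *ᵥ v := by
    funext l
    simp [hc, Matrix.mulVec, dotProduct, mul_comm]
  have hcy : c = y := by
    rw [hcv, ← hy, Matrix.mulVec_mulVec, hU, Matrix.one_mulVec]
  have hUc : U *ᵥ c = v := by rw [hcy, hy]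
  set m : Fin p → ℝ := fun j => Real.sqrt 2 * min (σ j) ε with hm
  set w : Fin p → ℝ := fun j => if σ j = 0 then 0 else c j / m j with hw
  have hmne : ∀ j, σ j ≠ 0 → m j ≠ 0 := by
    intro j hj
    have hσj : 0 < σ j := lt_of_le_of_ne (hσ j) (Ne.symm hj)
    have : 0 < m j := by
      apply mul_pos (Real.sqrt_pos.mpr (by norm_num)) (lt_min hσj hε)
    exact ne_of_gt this
  refine ⟨V *ᵥ w, ?_, ?_⟩
  · -- norm bound
    have hVw : ∑ i, (V *ᵥ w) i ^ 2 = ∑ j, w j ^ 2 := by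
      have h1' : ∑ i, (V *ᵥ w) i ^ 2 = (V *ᵥ w) ⬝ᵥ (V *ᵥ w) := by
        simp [dotProduct, sq]
      have h2'' : ∑ j, w j ^ 2 = w ⬝ᵥ w := by simp [dotProduct, sq]
      rw [h1', h2'', Matrix.dotProduct_mulVec, ← Matrix.mulVec_transpose,
        Matrix.mulVec_mulVec, hV, Matrix.one_mulVec]
    rw [hVw]
    have key : ∀ j, w j ^ 2 ≤
        (1/2) * (if σ j = 0 then 0 else c j ^ 2 / (σ j) ^ 2) + (1/2) * (c j ^ 2 / ε ^ 2) := by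
      intro j
      by_cases hj : σ j = 0
      · simp [hw, hj]
        positivity
      · have hσj : 0 < σ j := lt_of_le_of_ne (hσ j) (Ne.symm hj)
        have hm2 : m j ^ 2 = 2 * min (σ j) ε ^ 2 := by
          rw [hm]
          rw [mul_pow, Real.sq_sqrt (by norm_num : (2:ℝ) ≥ 0)]
        have hwj : w j ^ 2 = c j ^ 2 / (2 * min (σ j) ε ^ 2) := by
          rw [hw]
          simp only [hj, if_false]
          rw [div_pow, hm2]
        rw [hwj]
        simp only [hj, if_false]
        rcases min_cases (σ j) ε with ⟨hmin, _⟩ | ⟨hmin, _⟩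
        · rw [hmin]
          have : c j ^ 2 / (2 * σ j ^ 2) = (1/2) * (c j ^ 2 / σ j ^ 2) := by ring
          rw [this]
          have : (0:ℝ) ≤ (1/2) * (c j ^ 2 / ε ^ 2) := by positivity
          linarith
        · rw [hmin]
          have : c j ^ 2 / (2 * ε ^ 2) = (1/2) * (c j ^ 2 / ε ^ 2) := by ring
          rw [this]
          have : (0:ℝ) ≤ (1/2) * (c j ^ 2 / σ j ^ 2) := by positivity
          linarith
    calc ∑ j, w j ^ 2
        ≤ ∑ j, ((1/2) * (if σ j = 0 then 0 else c j ^ 2 / (σ j) ^ 2)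
            + (1/2) * (c j ^ 2 / ε ^ 2)) := Finset.sum_le_sum fun j _ => key j
      _ = (1/2) * (∑ j, (if σ j = 0 then 0 else c j ^ 2 / (σ j) ^ 2))
            + (1/2) * (∑ j, c j ^ 2 / ε ^ 2) := by
          rw [Finset.sum_add_distrib, Finset.mul_sum, Finset.mul_sum]
      _ ≤ (1/2) * 1 + (1/2) * 1 := by
          gcongr
      _ = 1 := by norm_num
  · -- the equation
    rw [Matrix.mulVec_mulVec, Matrix.mul_assoc (U * diagonal m) Vᵀ V, hV, Matrix.mul_one,
      ← Matrix.mulVec_mulVec]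
    have hdw : diagonal m *ᵥ w = c := by
      funext j
      rw [Matrix.mulVec_diagonal]
      by_cases hj : σ j = 0
      · simp [hw, hj, h2' j hj, hc]
      · rw [hw]
        simp only [hj, if_false]
        exact mul_div_cancel₀ (c j) (hmne j hj)
    rw [hdw, hUc]
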